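/- Let X be an absolutely continuous random variable with density f symmetric about zero (f(−x) = f(x), hence F(−y) = 1 − F(y)). Let X_{r:n} denote the r-th order statistic from an i.i.d. sample of size n, whose density is f_{r:n}(x) = (1/B(r, n−r+1)) F(x)^{r−1}(1−F(x))^{n−r} f(x). Then the weighted varextropy satisfies VJ^w(X_{r:n}) = VJ^w(X_{n−r+1:n}). -/
import Mathlib


open MeasureTheory

/-- Density of the `k`-th order statistic of a sample of size `n` from a
distribution with cdf `F` and density `f`:
`f_{k:n}(x) = (Γ(n+1)/(Γ(k)Γ(n−k+1))) F(x)^(k−1) (1−F(x))^(n−k) f(x)`. -/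
noncomputable def orderStatDensity (n k : ℕ) (F f : ℝ → ℝ) (x : ℝ) : ℝ :=
  (Real.Gamma ((n : ℝ) + 1) / (Real.Gamma (k : ℝ) * Real.Gamma ((n : ℝ) - (k : ℝ) + 1)))
    * (F x) ^ (k - 1) * (1 - F x) ^ (n - k) * f x

/-- Weighted varextropy of a density `h`:
`VJʷ = (1/4)∫ x² h(x)³ dx − ((1/2)∫ x h(x)² dx)²`. -/
noncomputable def weightedVarextropy (h : ℝ → ℝ) : ℝ :=
  (1/4 : ℝ) * (∫ x : ℝ, x^2 * (h x)^3) - ((1/2 : ℝ) * ∫ x : ℝ, x * (h x)^2)^2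

/-- Weighted varextropy is invariant under reflection of the density. -/
lemma weightedVarextropy_comp_neg (g : ℝ → ℝ) :
    weightedVarextropy (fun x => g (-x)) = weightedVarextropy g := by
  unfold weightedVarextropy
  have h1 : (∫ x : ℝ, x^2 * (g (-x))^3) = ∫ x : ℝ, x^2 * (g x)^3 := by
    rw [← integral_neg_eq_self (fun x : ℝ => x^2 * (g x)^3) volume]
    simp [neg_sq]
  have h2 : (∫ x : ℝ, x * (g (-x))^2) = - ∫ x : ℝ, x * (g x)^2 := by
    rw [← integral_neg_eq_self (fun x : ℝ => x * (g x)^2) volume, ← integral_neg]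
    congr 1
    funext x
    ring
  rw [h1, h2]
  ring

/-- For a density `f` symmetric about zero (so `F(−y) = 1 − F(y)`), the weighted
varextropies of the `r`-th and `(n−r+1)`-th order statistics coincide. -/
theorem weighted_varextropy_orderStat_symm
    (n r : ℕ) (hr : 1 ≤ r) (hrn : r ≤ n)
    (f F : ℝ → ℝ) (hf0 : ∀ x, 0 ≤ f x) (hmeas : Measurable f)
    (hf1 : (∫ x : ℝ, f x) = 1)
    (hsym : ∀ x, f (-x) = f x)
    (hF : ∀ x, F x = ∫ t in Set.Iic x, f t) :
    weightedVarextropy (orderStatDensity n r F f)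
      = weightedVarextropy (orderStatDensity n (n - r + 1) F f) := by
  have hint : Integrable f := by
    by_contra h
    rw [integral_undef h] at hf1
    norm_num at hf1
  have hFneg : ∀ x, F (-x) = 1 - F x := by
    intro x
    have e1 : F (-x) = ∫ t in Set.Ioi x, f t := by
      rw [hF]
      have : (∫ t in Set.Iic (-x), f t) = ∫ t in Set.Iic (-x), f (-t) := by
        simp [hsym]
      rw [this, integral_comp_neg_Iic, neg_neg]
    have e2 : (∫ t in Set.Iic x, f t) + (∫ t in Set.Ioi x, f t) = 1 := by
      rw [intervalIntegral.integral_Iic_add_Ioi hint.integrableOn hint.integrableOn, hf1]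
    rw [e1, hF]
    linarith
  have hdens : orderStatDensity n (n - r + 1) F f
      = fun x => orderStatDensity n r F f (-x) := by
    funext x
    unfold orderStatDensity
    rw [hFneg, hsym]
    have hc1 : (((n - r + 1 : ℕ) : ℝ)) = (n : ℝ) - (r : ℝ) + 1 := by
      push_cast [hrn]; ring
    have he1 : n - r + 1 - 1 = n - r := by omega
    have he2 : n - (n - r + 1) = r - 1 := by omega
    rw [hc1, he1, he2]
    have harg : (n : ℝ) - ((n : ℝ) - (r : ℝ) + 1) + 1 = (r : ℝ) := by ring
    rw [harg]
    have : 1 - (1 - F x) = F x := by ring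
    rw [this]
    ring
  rw [hdens, weightedVarextropy_comp_neg]
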